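/- For all σ > 0, γ > 0 and all u ∈ ℝ, the centered Voigt density equals a variance mixture of centered Gaussians with Levy(σ², γ²) mixing: ∫_ℝ [γ/(π(x² + γ²))] · [1/(σ√(2π))] e^{−(u−x)²/(2σ²)} dx = ∫_{σ²}^{∞} (1/√(2π v)) e^{−u²/(2v)} · (γ/√(2π)) (v − σ²)^{−3/2} e^{−γ²/(2(v − σ²))} dv. -/

import Mathlib

open MeasureTheory ProbabilityTheory Real Set
section helpers

-- shifted gaussian integral
lemma gauss_shift {A : ℝ} (hA : 0 < A) (b : ℝ) :
    ∫ x : ℝ, Real.exp (-(A * (x - b) ^ 2)) = Real.sqrt (π / A) := by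
  rw [show (fun x : ℝ => Real.exp (-(A * (x - b) ^ 2))) = fun x => (fun y => Real.exp (-A * y ^ 2)) (x - b) by
    funext x; simp [neg_mul]]
  rw [integral_sub_right_eq_self (fun y => Real.exp (-A * y ^ 2)) b]
  exact integral_gaussian A

lemma ib_gauss_shift {A : ℝ} (hA : 0 < A) (b : ℝ) :
    Integrable (fun x : ℝ => Real.exp (-(A * (x - b) ^ 2))) := by
  have := (integrable_exp_neg_mul_sq hA).comp_sub_right b
  simpa [neg_mul] using this

lemma sqrt_pull {a c : ℝ} (ha : 0 ≤ a) : a * Real.sqrt c = Real.sqrt (a ^ 2 * c) := by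
  rw [Real.sqrt_mul (sq_nonneg a), Real.sqrt_sq ha]

-- pointwise complete-the-square rewrite
lemma cs_eq {s σ : ℝ} (hs : 0 < s) (hσ : 0 < σ) (u x : ℝ) :
    (1 / Real.sqrt (2 * π * s) * Real.exp (-x ^ 2 / (2 * s))) *
      (1 / (σ * Real.sqrt (2 * π)) * Real.exp (-(u - x) ^ 2 / (2 * σ ^ 2))) =
    (1 / (Real.sqrt (2 * π * s) * (σ * Real.sqrt (2 * π))) * Real.exp (-u ^ 2 / (2 * (s + σ ^ 2)))) *
      Real.exp (-((s + σ ^ 2) / (2 * s * σ ^ 2) * (x - s * u / (s + σ ^ 2)) ^ 2)) := by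
  have h1 : s ≠ 0 := hs.ne'
  have h2 : σ ≠ 0 := hσ.ne'
  have h3 : s + σ ^ 2 ≠ 0 := by positivity
  rw [mul_mul_mul_comm, ← Real.exp_add, mul_assoc (1 / (Real.sqrt (2 * π * s) * (σ * Real.sqrt (2 * π)))), ← Real.exp_add, ← one_div_mul_one_div]
  congr 1
  · ring
  rw [Real.exp_eq_exp]
  field_simp
  ring

lemma gauss_conv {s σ : ℝ} (hs : 0 < s) (hσ : 0 < σ) (u : ℝ) :
    ∫ x : ℝ, (1 / Real.sqrt (2 * π * s) * Real.exp (-x ^ 2 / (2 * s))) *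
      (1 / (σ * Real.sqrt (2 * π)) * Real.exp (-(u - x) ^ 2 / (2 * σ ^ 2))) =
    1 / Real.sqrt (2 * π * (s + σ ^ 2)) * Real.exp (-u ^ 2 / (2 * (s + σ ^ 2))) := by
  have hA : 0 < (s + σ ^ 2) / (2 * s * σ ^ 2) := by positivity
  simp_rw [cs_eq hs hσ u]
  rw [MeasureTheory.integral_const_mul, gauss_shift hA]
  have e1 : Real.sqrt (2 * π * s) ^ 2 = 2 * π * s := Real.sq_sqrt (by positivity)
  have e2 : Real.sqrt (2 * π) ^ 2 = 2 * π := Real.sq_sqrt (by positivity)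
  have hc : 1 / (Real.sqrt (2 * π * s) * (σ * Real.sqrt (2 * π))) *
      Real.sqrt (π / ((s + σ ^ 2) / (2 * s * σ ^ 2))) = 1 / Real.sqrt (2 * π * (s + σ ^ 2)) := by
    rw [sqrt_pull (by positivity),
      show (1:ℝ)/Real.sqrt (2*π*(s+σ^2)) = Real.sqrt ((2*π*(s+σ^2))⁻¹) by
        rw [Real.sqrt_inv, one_div]]
    congr 1
    rw [div_pow, one_pow, mul_pow, mul_pow, e1, e2]
    have h1 : s ≠ 0 := hs.ne'
    have h2 : σ ≠ 0 := hσ.ne'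
    have h3 : s + σ ^ 2 ≠ 0 := by positivity
    have h4 : (π : ℝ) ≠ 0 := pi_ne_zero
    field_simp
  rw [mul_right_comm, hc]

lemma mix_eq {γ s : ℝ} (hs : 0 < s) (x : ℝ) :
    (1 / Real.sqrt (2 * π * s) * Real.exp (-x ^ 2 / (2 * s))) *
      (γ / Real.sqrt (2 * π) * s ^ (-(3:ℝ)/2) * Real.exp (-γ ^ 2 / (2 * s))) =
    (|(-1:ℝ)| * s ^ ((-1:ℝ) - 1)) •
      (fun t => γ / (2 * π) * Real.exp (-((x ^ 2 + γ ^ 2) / 2 * t))) (s ^ (-1:ℝ)) := by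
  have h1 : s ≠ 0 := hs.ne'
  have e1 : s ^ ((-1:ℝ) - 1) = (s ^ 2)⁻¹ := by
    rw [show ((-1:ℝ) - 1) = -((2:ℕ):ℝ) by norm_num, Real.rpow_neg hs.le, Real.rpow_natCast]
  have e2 : s ^ (-1:ℝ) = s⁻¹ := by
    rw [show (-1:ℝ) = -((1:ℕ):ℝ) by norm_num, Real.rpow_neg hs.le, Real.rpow_natCast, pow_one]
  have e3 : s ^ (-(3:ℝ)/2) = (s ^ 2)⁻¹ * Real.sqrt s := by
    rw [show (-(3:ℝ)/2) = (1:ℝ)/2 + (-((2:ℕ):ℝ)) by norm_num, Real.rpow_add hs,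
      Real.rpow_neg hs.le, Real.rpow_natCast, ← Real.sqrt_eq_rpow]
    ring
  have hexp : Real.exp (-x ^ 2 / (2 * s)) * Real.exp (-γ ^ 2 / (2 * s)) =
      Real.exp (-((x ^ 2 + γ ^ 2) / 2 * s⁻¹)) := by
    rw [← Real.exp_add]; congr 1; field_simp; ring
  have hsq : Real.sqrt s ≠ 0 := by positivity
  have h2π : Real.sqrt (2 * π) * Real.sqrt (2 * π) = 2 * π :=
    Real.mul_self_sqrt (by positivity)
  rw [show (1 / Real.sqrt (2 * π * s) * Real.exp (-x ^ 2 / (2 * s))) *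
      (γ / Real.sqrt (2 * π) * s ^ (-(3:ℝ)/2) * Real.exp (-γ ^ 2 / (2 * s))) =
      (1 / Real.sqrt (2 * π * s) * (γ / Real.sqrt (2 * π)) * s ^ (-(3:ℝ)/2)) *
      (Real.exp (-x ^ 2 / (2 * s)) * Real.exp (-γ ^ 2 / (2 * s))) from by ring]
  rw [hexp, smul_eq_mul, e2]
  rw [show (|(-1:ℝ)| * s ^ ((-1:ℝ) - 1)) * (γ / (2 * π) * Real.exp (-((x ^ 2 + γ ^ 2) / 2 * s⁻¹)))
      = (s ^ ((-1:ℝ) - 1) * (γ / (2 * π))) * Real.exp (-((x ^ 2 + γ ^ 2) / 2 * s⁻¹)) from by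
    rw [abs_neg, abs_one, one_mul]; ring]
  congr 1
  rw [e1, e3, Real.sqrt_mul (by positivity : (0:ℝ) ≤ 2 * π) s]
  rw [show 1 / (Real.sqrt (2 * π) * Real.sqrt s) * (γ / Real.sqrt (2 * π)) * ((s ^ 2)⁻¹ * Real.sqrt s)
      = γ / (Real.sqrt (2 * π) * Real.sqrt (2 * π)) * (Real.sqrt s / Real.sqrt s) * (s ^ 2)⁻¹ from by
    ring]
  rw [h2π, div_self hsq, mul_one]
  ring

lemma cauchy_mix {γ : ℝ} (hγ : 0 < γ) (x : ℝ) :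
    ∫ s in Ioi (0:ℝ), (1 / Real.sqrt (2 * π * s) * Real.exp (-x ^ 2 / (2 * s))) *
      (γ / Real.sqrt (2 * π) * s ^ (-(3:ℝ)/2) * Real.exp (-γ ^ 2 / (2 * s))) =
    γ / (π * (x ^ 2 + γ ^ 2)) := by
  have hc : 0 < (x ^ 2 + γ ^ 2) / 2 := by positivity
  rw [setIntegral_congr_fun measurableSet_Ioi (fun s hs => mix_eq hs x)]
  refine ((integral_comp_rpow_Ioi
      (fun t => γ / (2 * π) * Real.exp (-((x ^ 2 + γ ^ 2) / 2 * t)))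
      (by norm_num : (-1:ℝ) ≠ 0))).trans ?_
  rw [MeasureTheory.integral_const_mul]
  have key : ∫ t in Ioi (0:ℝ), Real.exp (-((x ^ 2 + γ ^ 2) / 2 * t)) = ((x ^ 2 + γ ^ 2) / 2)⁻¹ := by
    have h := integral_comp_mul_left_Ioi (fun t => Real.exp (-t)) 0 hc
    simp only [mul_zero, smul_eq_mul, integral_exp_neg_Ioi_zero, mul_one] at h
    simpa using h
  rw [key]
  field_simp

lemma ib_mix {γ : ℝ} (hγ : 0 < γ) (x : ℝ) :
    IntegrableOn (fun s : ℝ => (1 / Real.sqrt (2 * π * s) * Real.exp (-x ^ 2 / (2 * s))) *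
      (γ / Real.sqrt (2 * π) * s ^ (-(3:ℝ)/2) * Real.exp (-γ ^ 2 / (2 * s)))) (Ioi 0) := by
  have hc : 0 < (x ^ 2 + γ ^ 2) / 2 := by positivity
  have hbase : IntegrableOn (fun t : ℝ => Real.exp (-((x ^ 2 + γ ^ 2) / 2) * t)) (Ioi 0) :=
    exp_neg_integrableOn_Ioi 0 hc
  have hbase' : IntegrableOn
      (fun t : ℝ => γ / (2 * π) * Real.exp (-((x ^ 2 + γ ^ 2) / 2 * t))) (Ioi 0) := by
    simpa [neg_mul, IntegrableOn] using hbase.const_mul (γ / (2 * π))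
  have h2 := (integrableOn_Ioi_comp_rpow_iff
      (fun t : ℝ => γ / (2 * π) * Real.exp (-((x ^ 2 + γ ^ 2) / 2 * t)))
      (by norm_num : (-1:ℝ) ≠ 0)).mpr hbase'
  exact (integrableOn_congr_fun (fun s hs => mix_eq hs x)
    (measurableSet_Ioi : MeasurableSet (Ioi (0:ℝ)))).mpr h2

noncomputable def gaussD (t w : ℝ) : ℝ := 1 / Real.sqrt (2 * π * t) * Real.exp (-w ^ 2 / (2 * t))
noncomputable def levyD (γ s : ℝ) : ℝ :=
  γ / Real.sqrt (2 * π) * s ^ (-(3:ℝ)/2) * Real.exp (-γ ^ 2 / (2 * s))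

lemma levyD_nonneg {γ s : ℝ} (hγ : 0 ≤ γ) (hs : 0 ≤ s) : 0 ≤ levyD γ s :=
  mul_nonneg (mul_nonneg (div_nonneg hγ (Real.sqrt_nonneg _)) (Real.rpow_nonneg hs _))
    (Real.exp_pos _).le

lemma gaussD_nonneg (t w : ℝ) : 0 ≤ gaussD t w := by
  unfold gaussD; positivity

lemma aemeas_rpow (c : ℝ) : AEMeasurable (fun s : ℝ => s ^ c) (volume : Measure ℝ) := by
  have h0 : ({(0:ℝ)}ᶜ : Set ℝ) =ᵐ[(volume : Measure ℝ)] Set.univ := by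
    rw [ae_eq_univ, compl_compl]
    exact measure_singleton 0
  have hc : ContinuousOn (fun s : ℝ => s ^ c) {(0:ℝ)}ᶜ := fun s hs =>
    (ContinuousAt.rpow_const continuousAt_id (Or.inl hs)).continuousWithinAt
  have := hc.aemeasurable (μ := volume) (measurableSet_singleton (0:ℝ)).compl
  rwa [Measure.restrict_congr_set h0, Measure.restrict_univ] at this

lemma am_levyD (γ : ℝ) : AEMeasurable (fun s : ℝ => levyD γ s) (volume : Measure ℝ) := by
  unfold levyD
  exact (aemeasurable_const.mul (aemeas_rpow _)).mul
    ((Real.measurable_exp.comp (measurable_const.div (measurable_id.const_mul 2))).aemeasurable)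

lemma meas_gaussD (w : ℝ) : Measurable (fun t : ℝ => gaussD t w) := by
  unfold gaussD
  exact (measurable_const.div (Real.continuous_sqrt.measurable.comp
      (measurable_id.const_mul (2 * π)))).mul
    (Real.measurable_exp.comp (measurable_const.div (measurable_id.const_mul 2)))

end helpers


/-- the centered Voigt(γ, σ²) density (the convolution of the Cauchy(0, γ)
density with the N(0, σ²) density) equals the variance mixture of centered Gaussians with
Levy(σ², γ²) mixing density. -/
theorem voigt_eq_normal_scale_mixture (σ γ : ℝ) (hσ : 0 < σ) (hγ : 0 < γ) (u : ℝ) :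
    (∫ x : ℝ, (γ / (π * (x ^ 2 + γ ^ 2))) *
        (1 / (σ * Real.sqrt (2 * π)) * Real.exp (-(u - x) ^ 2 / (2 * σ ^ 2)))) =
      ∫ v in Set.Ioi (σ ^ 2), (1 / Real.sqrt (2 * π * v)) * Real.exp (-u ^ 2 / (2 * v)) *
        (γ / Real.sqrt (2 * π) * (v - σ ^ 2) ^ (-(3 : ℝ) / 2) *
          Real.exp (-γ ^ 2 / (2 * (v - σ ^ 2)))) := by
  set G : ℝ → ℝ := fun x => 1 / (σ * Real.sqrt (2 * π)) * Real.exp (-(u - x) ^ 2 / (2 * σ ^ 2))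
    with hGdef
  have hGcont : Continuous G := by
    apply continuous_const.mul
    exact Real.continuous_exp.comp ((((continuous_const.sub continuous_id).pow 2).neg).div_const _)
  have hGnn : ∀ x, 0 ≤ G x := fun x => by rw [hGdef]; positivity
  have hR : (∫ v in Ioi (σ ^ 2), (1 / Real.sqrt (2 * π * v)) * Real.exp (-u ^ 2 / (2 * v)) *
      (γ / Real.sqrt (2 * π) * (v - σ ^ 2) ^ (-(3 : ℝ) / 2) *
        Real.exp (-γ ^ 2 / (2 * (v - σ ^ 2)))))
      = ∫ v in Ioi (σ ^ 2), gaussD v u * levyD γ (v - σ ^ 2) := rfl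
  rw [hR]
  -- measurability
  have am_levy_shift : AEMeasurable (fun v : ℝ => levyD γ (v - σ ^ 2)) (volume : Measure ℝ) := by
    have h := (am_levyD γ).comp_quasiMeasurePreserving
      (measurePreserving_add_right (volume : Measure ℝ) (-σ ^ 2)).quasiMeasurePreserving
    simpa [Function.comp_def, sub_eq_add_neg] using h
  have hRmeas : AEStronglyMeasurable (fun v : ℝ => gaussD v u * levyD γ (v - σ ^ 2))
      (volume.restrict (Ioi (σ ^ 2))) :=
    (((meas_gaussD u).aemeasurable.mul am_levy_shift).mono_measure
      Measure.restrict_le_self).aestronglyMeasurable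
  have hRnn : 0 ≤ᵐ[volume.restrict (Ioi (σ ^ 2))] fun v => gaussD v u * levyD γ (v - σ ^ 2) :=
    (ae_restrict_iff' measurableSet_Ioi).2 (ae_of_all _ fun v hv =>
      mul_nonneg (gaussD_nonneg _ _)
        (levyD_nonneg hγ.le (by simp only [mem_Ioi] at hv; linarith)))
  have hLmeas : AEStronglyMeasurable (fun x : ℝ => (γ / (π * (x ^ 2 + γ ^ 2))) * G x)
      (volume : Measure ℝ) := by
    apply Continuous.aestronglyMeasurable
    exact (continuous_const.div
      (continuous_const.mul ((continuous_id.pow 2).add continuous_const))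
      (fun x => (by positivity : π * (x ^ 2 + γ ^ 2) ≠ 0))).mul hGcont
  have hLnn : 0 ≤ᵐ[(volume : Measure ℝ)] fun x => (γ / (π * (x ^ 2 + γ ^ 2))) * G x :=
    ae_of_all _ fun x => mul_nonneg (by positivity) (hGnn x)
  rw [integral_eq_lintegral_of_nonneg_ae hLnn hLmeas,
    integral_eq_lintegral_of_nonneg_ae hRnn hRmeas]
  congr 1
  have am_mix_x : ∀ x : ℝ, AEMeasurable
      (fun s : ℝ => ENNReal.ofReal ((1 / Real.sqrt (2 * π * s) * Real.exp (-x ^ 2 / (2 * s))) *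
        (γ / Real.sqrt (2 * π) * s ^ (-(3:ℝ)/2) * Real.exp (-γ ^ 2 / (2 * s)))))
      (volume.restrict (Ioi 0)) := fun x =>
    ((((meas_gaussD x).aemeasurable.mul (am_levyD γ)).mono_measure
      Measure.restrict_le_self)).ennreal_ofReal
  calc ∫⁻ x, ENNReal.ofReal ((γ / (π * (x ^ 2 + γ ^ 2))) * G x)
      = ∫⁻ x, ∫⁻ s in Ioi (0:ℝ), ENNReal.ofReal (gaussD s x * levyD γ s * G x) := by
        refine lintegral_congr fun x => ?_
        have hnnmix : 0 ≤ᵐ[volume.restrict (Ioi (0:ℝ))]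
            fun s : ℝ => (1 / Real.sqrt (2 * π * s) * Real.exp (-x ^ 2 / (2 * s))) *
              (γ / Real.sqrt (2 * π) * s ^ (-(3:ℝ)/2) * Real.exp (-γ ^ 2 / (2 * s))) :=
          (ae_restrict_iff' measurableSet_Ioi).2 (ae_of_all _ fun s hs =>
            mul_nonneg (gaussD_nonneg s x) (levyD_nonneg hγ.le (le_of_lt hs)))
        rw [ENNReal.ofReal_mul (by positivity : (0:ℝ) ≤ γ / (π * (x ^ 2 + γ ^ 2))),
          ← cauchy_mix hγ x,
          ofReal_integral_eq_lintegral_ofReal (ib_mix hγ x) hnnmix,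
          ← lintegral_mul_const'' (ENNReal.ofReal (G x)) (am_mix_x x)]
        refine setLIntegral_congr_fun measurableSet_Ioi (fun s hs => ?_)
        exact (ENNReal.ofReal_mul
          (mul_nonneg (gaussD_nonneg s x) (levyD_nonneg hγ.le (le_of_lt hs)))).symm
    _ = ∫⁻ s in Ioi (0:ℝ), ∫⁻ x, ENNReal.ofReal (gaussD s x * levyD γ s * G x) := by
        apply lintegral_lintegral_swap
        apply AEMeasurable.ennreal_ofReal
        have h1 : Measurable fun p : ℝ × ℝ => gaussD p.2 p.1 := by
          unfold gaussD
          exact (measurable_const.div (Real.continuous_sqrt.measurable.comp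
              (measurable_snd.const_mul (2 * π)))).mul
            (Real.measurable_exp.comp
              (((measurable_fst.pow_const 2).neg).div (measurable_snd.const_mul 2)))
        have h2 : AEMeasurable (fun p : ℝ × ℝ => levyD γ p.2)
            ((volume : Measure ℝ).prod (volume.restrict (Ioi 0))) :=
          ((am_levyD γ).mono_measure Measure.restrict_le_self).comp_quasiMeasurePreserving
            Measure.quasiMeasurePreserving_snd
        exact (h1.aemeasurable.mul h2).mul
          ((hGcont.measurable.comp measurable_fst).aemeasurable)
    _ = ∫⁻ s in Ioi (0:ℝ), ENNReal.ofReal (gaussD (s + σ ^ 2) u * levyD γ s) := by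
        refine setLIntegral_congr_fun measurableSet_Ioi (fun s hs => ?_)
        have hs' : 0 < s := hs
        have hA : 0 < (s + σ ^ 2) / (2 * s * σ ^ 2) := by positivity
        have hInt : Integrable (fun x : ℝ => gaussD s x * G x) := by
          have heq : (fun x : ℝ => gaussD s x * G x) = fun x =>
              (1 / (Real.sqrt (2 * π * s) * (σ * Real.sqrt (2 * π))) *
                Real.exp (-u ^ 2 / (2 * (s + σ ^ 2)))) *
              Real.exp (-((s + σ ^ 2) / (2 * s * σ ^ 2) * (x - s * u / (s + σ ^ 2)) ^ 2)) :=
            funext fun x => cs_eq hs' hσ u x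
          rw [heq]
          exact (ib_gauss_shift hA _).const_mul _
        have hnn : 0 ≤ᵐ[(volume : Measure ℝ)] fun x => gaussD s x * G x * levyD γ s :=
          ae_of_all _ fun x => mul_nonneg (mul_nonneg (gaussD_nonneg _ _) (hGnn x))
            (levyD_nonneg hγ.le hs'.le)
        calc ∫⁻ x, ENNReal.ofReal (gaussD s x * levyD γ s * G x)
            = ∫⁻ x, ENNReal.ofReal (gaussD s x * G x * levyD γ s) :=
              lintegral_congr fun x => congrArg ENNReal.ofReal (by ring)
          _ = ENNReal.ofReal (∫ x, gaussD s x * G x * levyD γ s) :=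
              (ofReal_integral_eq_lintegral_ofReal (hInt.mul_const _) hnn).symm
          _ = ENNReal.ofReal (gaussD (s + σ ^ 2) u * levyD γ s) := by
              rw [MeasureTheory.integral_mul_const]
              have hgc : ∫ x, gaussD s x * G x = gaussD (s + σ ^ 2) u := gauss_conv hs' hσ u
              rw [hgc]
    _ = ∫⁻ v in Ioi (σ ^ 2), ENNReal.ofReal (gaussD v u * levyD γ (v - σ ^ 2)) := by
        have h1 : ∀ s : ℝ,
            (Ioi (σ ^ 2)).indicator (fun v => ENNReal.ofReal (gaussD v u * levyD γ (v - σ ^ 2)))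
              (s + σ ^ 2)
            = (Ioi (0:ℝ)).indicator
              (fun s => ENNReal.ofReal (gaussD (s + σ ^ 2) u * levyD γ s)) s := by
          intro s
          simp only [Set.indicator_apply, mem_Ioi, add_sub_cancel_right, lt_add_iff_pos_left]
        rw [← lintegral_indicator measurableSet_Ioi, ← lintegral_indicator measurableSet_Ioi]
        rw [← lintegral_add_right_eq_self
          ((Ioi (σ ^ 2)).indicator fun v => ENNReal.ofReal (gaussD v u * levyD γ (v - σ ^ 2)))
          (σ ^ 2)]
        exact lintegral_congr fun s => (h1 s).symm
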